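/- Let f = g - h where g is γ₁-convex and h is γ₂-convex on ℝⁿ (with g proper and h real-valued). Let sequences {x_k}, {y_k} satisfy y_k ∈ ∂h(x_k) and x_{k+1} ∈ ∂g*(y_k) for all k. Then f(x_k) - f(x_{k+1}) ≥ ((γ₁+γ₂)/2)‖x_{k+1} - x_k‖² for all k; in particular {f(x_k)} is nonincreasing. -/

import Mathlib

noncomputable section

/-- `ℝⁿ`. -/
abbrev E (n : ℕ) := EuclideanSpace ℝ (Fin n)

/-- Convex subdifferential of an extended-real-valued function. -/
def subdiffE {n : ℕ} (g : E n → EReal) (x : E n) : Set (E n) :=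
  {v | ∀ y, ((inner ℝ v (y - x) : ℝ) : EReal) + g x ≤ g y}

/-- Convex subdifferential of a real-valued function. -/
def subdiffR {n : ℕ} (h : E n → ℝ) (x : E n) : Set (E n) :=
  {w | ∀ y, (inner ℝ w (y - x) : ℝ) ≤ h y - h x}

/-- Fenchel conjugate. -/
def fconj {n : ℕ} (g : E n → EReal) (y : E n) : EReal :=
  ⨆ x, (((inner ℝ y x : ℝ) : EReal) - g x)

/-- Convexity for extended-real-valued functions. -/
def ConvexE {n : ℕ} (g : E n → EReal) : Prop :=
  ∀ x y : E n, ∀ t : ℝ, 0 ≤ t → t ≤ 1 →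
    g (t • x + (1 - t) • y) ≤ (t : EReal) * g x + ((1 - t : ℝ) : EReal) * g y

/-- `γ`-convexity for extended-real-valued functions. -/
def GammaConvexE {n : ℕ} (g : E n → EReal) (γ : ℝ) : Prop :=
  ConvexE (fun x => g x - ((γ / 2 * ‖x‖ ^ 2 : ℝ) : EReal))

namespace DCAAux

variable {n : ℕ}

lemma ereal_cases {x : EReal} (hb : x ≠ ⊥) (ht : x ≠ ⊤) : ∃ a : ℝ, x = (a : EReal) := by
  induction x using EReal.rec with
  | bot => exact absurd rfl hb
  | coe a => exact ⟨a, rfl⟩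
  | top => exact absurd rfl ht

lemma le_sub_of_forall {A B C : ℝ} (hC : 0 ≤ C)
    (H : ∀ t : ℝ, 0 < t → t < 1 → t * A ≤ t * B - C * (t * (1 - t))) : A ≤ B - C := by
  by_contra hcon
  push_neg at hcon
  set δ := A - (B - C) with hδ
  have hδ0 : 0 < δ := by simp only [hδ]; linarith
  set t := min (1 / 2 : ℝ) (δ / (2 * (C + 1))) with ht
  have ht0 : 0 < t := lt_min (by norm_num) (div_pos hδ0 (by linarith))
  have ht1 : t < 1 := lt_of_le_of_lt (min_le_left _ _) (by norm_num)
  have h2 := H t ht0 ht1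
  have h2' : t * A ≤ t * (B - C * (1 - t)) := by nlinarith
  have h3 : A ≤ B - C * (1 - t) := le_of_mul_le_mul_left h2' ht0
  have htle : t ≤ δ / (2 * (C + 1)) := min_le_right _ _
  have h4 : C * t ≤ C * (δ / (2 * (C + 1))) := mul_le_mul_of_nonneg_left htle hC
  have h5 : C * (δ / (2 * (C + 1))) ≤ δ / 2 := by
    rw [mul_div_assoc', div_le_div_iff₀ (by linarith) (by norm_num)]
    nlinarith
  nlinarith

lemma norm_combo_sq (x y : E n) (t : ℝ) (h0 : 0 ≤ t) (h1 : t ≤ 1) :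
    ‖t • x + (1 - t) • y‖ ^ 2
      = t * ‖x‖ ^ 2 + (1 - t) * ‖y‖ ^ 2 - t * (1 - t) * ‖x - y‖ ^ 2 := by
  have e1 : ‖t • x + (1 - t) • y‖ ^ 2
      = ‖t • x‖ ^ 2 + 2 * (inner ℝ (t • x) ((1 - t) • y) : ℝ) + ‖(1 - t) • y‖ ^ 2 :=
    norm_add_sq_real _ _
  have e2 : (inner ℝ (t • x) ((1 - t) • y) : ℝ) = t * ((1 - t) * (inner ℝ x y : ℝ)) := by
    rw [real_inner_smul_left, real_inner_smul_right]
  have e3 : ‖t • x‖ = t * ‖x‖ := by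
    rw [norm_smul, Real.norm_eq_abs, abs_of_nonneg h0]
  have e4 : ‖(1 - t) • y‖ = (1 - t) * ‖y‖ := by
    rw [norm_smul, Real.norm_eq_abs, abs_of_nonneg (by linarith)]
  have e5 : ‖x - y‖ ^ 2 = ‖x‖ ^ 2 - 2 * (inner ℝ x y : ℝ) + ‖y‖ ^ 2 := norm_sub_sq_real _ _
  rw [e1, e2, e3, e4, e5]; ring

lemma gamma_finite {g : E n → EReal} {γ : ℝ} (hg : GammaConvexE g γ)
    {x y : E n} {a b t : ℝ} (hx : g x = (a : EReal)) (hy : g y = (b : EReal))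
    (h0 : 0 ≤ t) (h1 : t ≤ 1) :
    g (t • x + (1 - t) • y)
      ≤ ((t * a + (1 - t) * b - γ / 2 * (t * (1 - t)) * ‖x - y‖ ^ 2 : ℝ) : EReal) := by
  have hφ := hg x y t h0 h1
  dsimp only at hφ
  rw [hx, hy, ← EReal.coe_sub, ← EReal.coe_sub, ← EReal.coe_mul, ← EReal.coe_mul,
    ← EReal.coe_add] at hφ
  rcases eq_or_ne (g (t • x + (1 - t) • y)) ⊤ with hz | hz
  · rw [hz, EReal.top_sub_coe, top_le_iff] at hφ
    exact absurd hφ (EReal.coe_ne_top _)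
  · rcases eq_or_ne (g (t • x + (1 - t) • y)) ⊥ with hz' | hz'
    · rw [hz']; exact bot_le
    obtain ⟨c, hc⟩ := ereal_cases hz' hz
    rw [hc, ← EReal.coe_sub, EReal.coe_le_coe_iff] at hφ
    rw [hc, EReal.coe_le_coe_iff]
    have hcs := norm_combo_sq x y t h0 h1
    have hq : γ / 2 * ‖t • x + (1 - t) • y‖ ^ 2
        = γ / 2 * (t * ‖x‖ ^ 2 + (1 - t) * ‖y‖ ^ 2 - t * (1 - t) * ‖x - y‖ ^ 2) := by
      rw [hcs]
    nlinarith [hφ, hq]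

lemma convexE_of_gamma {g : E n → EReal} {γ : ℝ} (hγ : 0 ≤ γ) (hg : GammaConvexE g γ)
    (hnb : ∀ x, g x ≠ ⊥) : ConvexE g := by
  intro x y t h0 h1
  rcases eq_or_lt_of_le h0 with h0' | h0'
  · rw [← h0']
    norm_num
  rcases eq_or_lt_of_le h1 with h1' | h1'
  · rw [h1']
    norm_num
  rcases eq_or_ne (g x) ⊤ with hx | hx
  · rw [hx, EReal.coe_mul_top_of_pos h0']
    have hq : ((1 - t : ℝ) : EReal) * g y ≠ ⊥ := by
      rcases eq_or_ne (g y) ⊤ with hy | hy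
      · rw [hy, EReal.coe_mul_top_of_pos (by exact_mod_cast sub_pos.mpr h1')]
        exact top_ne_bot
      · obtain ⟨b, hb⟩ := ereal_cases (hnb y) hy
        rw [hb, ← EReal.coe_mul]
        exact EReal.coe_ne_bot _
    rw [EReal.top_add_of_ne_bot hq]
    exact le_top
  rcases eq_or_ne (g y) ⊤ with hy | hy
  · rw [hy, EReal.coe_mul_top_of_pos (by exact_mod_cast sub_pos.mpr h1')]
    have hq : (t : EReal) * g x ≠ ⊥ := by
      obtain ⟨a, ha⟩ := ereal_cases (hnb x) hx
      rw [ha, ← EReal.coe_mul]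
      exact EReal.coe_ne_bot _
    rw [EReal.add_top_of_ne_bot hq]
    exact le_top
  obtain ⟨a, ha⟩ := ereal_cases (hnb x) hx
  obtain ⟨b, hb⟩ := ereal_cases (hnb y) hy
  refine le_trans (gamma_finite hg ha hb h0 h1) ?_
  rw [ha, hb, ← EReal.coe_mul, ← EReal.coe_mul, ← EReal.coe_add, EReal.coe_le_coe_iff]
  have hnn : 0 ≤ γ / 2 * (t * (1 - t)) * ‖x - y‖ ^ 2 :=
    mul_nonneg (mul_nonneg (by linarith) (mul_nonneg h0 (by linarith))) (sq_nonneg _)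
  linarith

lemma strong_subgrad {g : E n → EReal} {γ : ℝ} (hγ : 0 ≤ γ) (hg : GammaConvexE g γ)
    (hnb : ∀ x, g x ≠ ⊥) {x v : E n} {a : ℝ} (hx : g x = (a : EReal))
    (hv : v ∈ subdiffE g x) (z : E n) :
    ((a + (inner ℝ v (z - x) : ℝ) + γ / 2 * ‖z - x‖ ^ 2 : ℝ) : EReal) ≤ g z := by
  rcases eq_or_ne (g z) ⊤ with hz | hz
  · rw [hz]; exact le_top
  obtain ⟨b, hb⟩ := ereal_cases (hnb z) hz
  rw [hb, EReal.coe_le_coe_iff]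
  have key : ∀ t : ℝ, 0 < t → t < 1 →
      t * ((inner ℝ v (z - x) : ℝ) + a) ≤ t * b - γ / 2 * ‖z - x‖ ^ 2 * (t * (1 - t)) := by
    intro t ht0 ht1
    have h1 := hv (t • z + (1 - t) • x)
    have h2 := gamma_finite hg hb hx ht0.le ht1.le
    have h3 : (t • z + (1 - t) • x) - x = t • (z - x) := by
      rw [sub_smul, one_smul, smul_sub]
      abel
    rw [h3, hx, real_inner_smul_right, ← EReal.coe_add] at h1
    have h5 := le_trans h1 h2
    rw [EReal.coe_le_coe_iff] at h5
    nlinarith [h5]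
  have hmain := le_sub_of_forall
    (mul_nonneg (by linarith : (0:ℝ) ≤ γ / 2) (sq_nonneg ‖z - x‖)) key
  linarith

lemma strong_subgrad_real {h : E n → ℝ} {γ : ℝ} (hγ : 0 ≤ γ)
    (hh : ConvexOn ℝ Set.univ (fun x => h x - γ / 2 * ‖x‖ ^ 2))
    {x v : E n} (hv : v ∈ subdiffR h x) (z : E n) :
    h x + (inner ℝ v (z - x) : ℝ) + γ / 2 * ‖z - x‖ ^ 2 ≤ h z := by
  have key : ∀ t : ℝ, 0 < t → t < 1 →
      t * ((inner ℝ v (z - x) : ℝ)) ≤ t * (h z - h x) - γ / 2 * ‖z - x‖ ^ 2 * (t * (1 - t)) := by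
    intro t ht0 ht1
    have h1 := hv (t • z + (1 - t) • x)
    have h2 := hh.2 (Set.mem_univ z) (Set.mem_univ x) ht0.le (by linarith : (0:ℝ) ≤ 1 - t)
      (by ring)
    simp only [smul_eq_mul] at h2
    have hcs := norm_combo_sq z x t ht0.le ht1.le
    have h3 : (t • z + (1 - t) • x) - x = t • (z - x) := by
      rw [sub_smul, one_smul, smul_sub]
      abel
    rw [h3, real_inner_smul_right] at h1
    have hq : γ / 2 * ‖t • z + (1 - t) • x‖ ^ 2
        = γ / 2 * (t * ‖z‖ ^ 2 + (1 - t) * ‖x‖ ^ 2 - t * (1 - t) * ‖z - x‖ ^ 2) := by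
      rw [hcs]
    nlinarith [h1, h2, hq]
  have hmain := le_sub_of_forall
    (mul_nonneg (by linarith : (0:ℝ) ≤ γ / 2) (sq_nonneg ‖z - x‖)) key
  linarith

/-- The epigraph of `g` as a subset of `E n × ℝ`. -/
def Epi (g : E n → EReal) : Set (E n × ℝ) := {p | g p.1 ≤ (p.2 : EReal)}

lemma epi_closed {g : E n → EReal} (hglsc : LowerSemicontinuous g) : IsClosed (Epi g) := by
  have h1 : IsClosed {p : E n × EReal | g p.1 ≤ p.2} := hglsc.isClosed_epigraph
  have h2 : Epi g = (fun p : E n × ℝ => (p.1, (p.2 : EReal))) ⁻¹'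
      {p : E n × EReal | g p.1 ≤ p.2} := rfl
  rw [h2]
  exact h1.preimage (continuous_fst.prodMk (continuous_coe_real_ereal.comp continuous_snd))

lemma epi_convex {g : E n → EReal} (hnb : ∀ x, g x ≠ ⊥) (hc : ConvexE g) :
    Convex ℝ (Epi g) := by
  intro p hp q hq s t hs ht hst
  simp only [Epi, Set.mem_setOf_eq] at hp hq ⊢
  have hpt : g p.1 ≠ ⊤ := ne_top_of_le_ne_top (EReal.coe_ne_top _) hp
  have hqt : g q.1 ≠ ⊤ := ne_top_of_le_ne_top (EReal.coe_ne_top _) hq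
  obtain ⟨ap, hap⟩ := ereal_cases (hnb _) hpt
  obtain ⟨aq, haq⟩ := ereal_cases (hnb _) hqt
  rw [hap] at hp; rw [haq] at hq
  rw [EReal.coe_le_coe_iff] at hp hq
  have h1 := hc p.1 q.1 s hs (by linarith)
  have hts : (1 - s) = t := by linarith
  rw [hts] at h1
  have hfst : (s • p + t • q).1 = s • p.1 + t • q.1 := rfl
  have hsnd : (s • p + t • q).2 = s * p.2 + t * q.2 := rfl
  rw [hfst, hsnd]
  refine le_trans h1 ?_
  rw [hap, haq, ← EReal.coe_mul, ← EReal.coe_mul, ← EReal.coe_add, EReal.coe_le_coe_iff]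
  have h2 := mul_le_mul_of_nonneg_left hp hs
  have h3 := mul_le_mul_of_nonneg_left hq ht
  linarith

lemma sep {g : E n → EReal} (hconv : Convex ℝ (Epi g)) (hclosed : IsClosed (Epi g))
    {p : E n × ℝ} (hp : p ∉ Epi g) :
    ∃ (w : E n) (b u : ℝ),
      (∀ z : E n, ∀ r : ℝ, g z ≤ (r : EReal) → (inner ℝ w z : ℝ) + r * b < u) ∧
      u < (inner ℝ w p.1 : ℝ) + p.2 * b := by
  obtain ⟨f, u, hfu, hup⟩ := geometric_hahn_banach_closed_point hconv hclosed hp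
  set L : E n →L[ℝ] ℝ := f.comp (ContinuousLinearMap.inl ℝ (E n) ℝ) with hL
  set w : E n := (InnerProductSpace.toDual ℝ (E n)).symm L with hw
  have hwz : ∀ z : E n, (inner ℝ w z : ℝ) = f (z, 0) := by
    intro z
    rw [hw, InnerProductSpace.toDual_symm_apply]
    simp [hL]
  have hdec : ∀ z : E n, ∀ r : ℝ, f (z, r) = (inner ℝ w z : ℝ) + r * f (0, 1) := by
    intro z r
    have h1 : ((z, r) : E n × ℝ) = (z, (0 : ℝ)) + r • ((0 : E n), (1 : ℝ)) := by
      ext <;> simp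
    rw [h1, map_add, map_smul, smul_eq_mul, hwz]
  refine ⟨w, f (0, 1), u, fun z r hzr => ?_, ?_⟩
  · have h2 := hfu (z, r) hzr
    rwa [hdec] at h2
  · have h2 : u < f (p.1, p.2) := hup
    rwa [hdec] at h2

lemma minorant_of_sep {g : E n → EReal} (hnb : ∀ x, g x ≠ ⊥) {w : E n} {b u : ℝ} (hb : b < 0)
    (h1 : ∀ z : E n, ∀ r : ℝ, g z ≤ (r : EReal) → (inner ℝ w z : ℝ) + r * b < u) :
    ∃ (w' : E n) (c' : ℝ),
      (∀ z, (((inner ℝ w' z : ℝ) - c' : ℝ) : EReal) ≤ g z) ∧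
      (∀ z : E n, (inner ℝ w' z : ℝ) - c' = ((inner ℝ w z : ℝ) - u) / (-b)) := by
  have hβ : 0 < -b := by linarith
  have hid : ∀ z : E n, (inner ℝ ((-b)⁻¹ • w) z : ℝ) - u / (-b)
      = ((inner ℝ w z : ℝ) - u) / (-b) := by
    intro z
    rw [real_inner_smul_left, inv_mul_eq_div, sub_div]
  refine ⟨(-b)⁻¹ • w, u / (-b), ?_, hid⟩
  intro z
  rcases eq_or_ne (g z) ⊤ with hz | hz
  · rw [hz]; exact le_top
  obtain ⟨r, hr⟩ := ereal_cases (hnb z) hz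
  have h2 := h1 z r hr.le
  rw [hr, EReal.coe_le_coe_iff, hid z, div_le_iff₀ hβ]
  linarith

lemma exists_minorant {g : E n → EReal} (hnb : ∀ x, g x ≠ ⊥) {x₀ : E n} {a₀ : ℝ}
    (hx₀ : g x₀ = (a₀ : EReal)) (hconv : Convex ℝ (Epi g)) (hclosed : IsClosed (Epi g)) :
    ∃ (w : E n) (c : ℝ), ∀ z, (((inner ℝ w z : ℝ) - c : ℝ) : EReal) ≤ g z := by
  have hp : ((x₀, a₀ - 1) : E n × ℝ) ∉ Epi g := by
    simp only [Epi, Set.mem_setOf_eq, hx₀, EReal.coe_le_coe_iff]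
    linarith
  obtain ⟨w, b, u, h1, h2⟩ := sep hconv hclosed hp
  have h3 := h1 x₀ a₀ hx₀.le
  have h2' : u < (inner ℝ w x₀ : ℝ) + (a₀ - 1) * b := h2
  have hb : b < 0 := by nlinarith
  obtain ⟨w', c', hm, _⟩ := minorant_of_sep hnb hb h1
  exact ⟨w', c', hm⟩

lemma fconj_lower {g : E n → EReal} (y z : E n) :
    ((inner ℝ y z : ℝ) : EReal) - g z ≤ fconj g y :=
  le_iSup (fun x => (((inner ℝ y x : ℝ)) : EReal) - g x) z

lemma fconj_le {g : E n → EReal} {w : E n} {c : ℝ}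
    (hm : ∀ z, (((inner ℝ w z : ℝ) - c : ℝ) : EReal) ≤ g z) : fconj g w ≤ (c : EReal) := by
  refine iSup_le fun z => ?_
  rcases eq_or_ne (g z) ⊤ with hz | hz
  · rw [hz, EReal.sub_top]
    exact bot_le
  rcases eq_or_ne (g z) ⊥ with hz' | hz'
  · have := hm z
    rw [hz'] at this
    exact absurd (le_bot_iff.mp this) (EReal.coe_ne_bot _)
  obtain ⟨r, hr⟩ := ereal_cases hz' hz
  have h2 := hm z
  rw [hr, EReal.coe_le_coe_iff] at h2
  rw [hr, ← EReal.coe_sub, EReal.coe_le_coe_iff]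
  linarith

lemma fy_ineq {g : E n → EReal} {y : E n} {s : ℝ} (hnb : ∀ x, g x ≠ ⊥)
    (hs : fconj g y = (s : EReal)) (z : E n) :
    (((inner ℝ y z : ℝ) - s : ℝ) : EReal) ≤ g z := by
  have h := fconj_lower (g := g) y z
  rw [hs] at h
  rcases eq_or_ne (g z) ⊤ with hz | hz
  · rw [hz]; exact le_top
  obtain ⟨r, hr⟩ := ereal_cases (hnb z) hz
  rw [hr, ← EReal.coe_sub, EReal.coe_le_coe_iff] at h
  rw [hr, EReal.coe_le_coe_iff]
  linarith

lemma subdiff_of_conj {g : E n → EReal} (hnb : ∀ x, g x ≠ ⊥)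
    (hglsc : LowerSemicontinuous g) (hconvE : ConvexE g)
    {x₀ : E n} {a₀ : ℝ} (hx₀ : g x₀ = (a₀ : EReal))
    {v yk : E n} (hv : v ∈ subdiffE (fconj g) yk) :
    ∃ a : ℝ, g v = (a : EReal) ∧ yk ∈ subdiffE g v := by
  have hclosed := epi_closed hglsc
  have hconv := epi_convex hnb hconvE
  obtain ⟨w₀, c₀, hm₀⟩ := exists_minorant hnb hx₀ hconv hclosed
  have hle₀ : fconj g w₀ ≤ (c₀ : EReal) := fconj_le hm₀
  have hnbot : fconj g yk ≠ ⊥ := by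
    intro hbot
    have h := fconj_lower (g := g) yk x₀
    rw [hbot, hx₀, ← EReal.coe_sub, le_bot_iff] at h
    exact EReal.coe_ne_bot _ h
  have hntop : fconj g yk ≠ ⊤ := by
    intro htop
    have h := hv w₀
    rw [htop, EReal.add_top_of_ne_bot (EReal.coe_ne_bot _)] at h
    exact EReal.coe_ne_top c₀ (top_le_iff.mp (le_trans h hle₀))
  obtain ⟨s, hs⟩ := ereal_cases hnbot hntop
  set c : ℝ := (inner ℝ yk v : ℝ) - s with hc
  have hkey : g v ≤ (c : EReal) := by
    by_contra hcon
    push_neg at hcon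
    have hpnot : ((v, c) : E n × ℝ) ∉ Epi g := by
      simp only [Epi, Set.mem_setOf_eq]
      exact not_le.mpr hcon
    obtain ⟨w, b, u, h1, h2⟩ := sep hconv hclosed hpnot
    have h2' : u < (inner ℝ w v : ℝ) + c * b := h2
    have hble : b ≤ 0 := by
      by_contra hbpos
      push_neg at hbpos
      set m : ℝ := max 0 ((u - (inner ℝ w x₀ : ℝ)) / b + 1 - a₀) with hm
      have hm0 : 0 ≤ m := le_max_left _ _
      have hmem : g x₀ ≤ ((a₀ + m : ℝ) : EReal) := by
        rw [hx₀, EReal.coe_le_coe_iff]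
        linarith
      have h3 := h1 x₀ (a₀ + m) hmem
      have hm1 : (u - (inner ℝ w x₀ : ℝ)) / b + 1 - a₀ ≤ m := le_max_right _ _
      have h4 : ((u - (inner ℝ w x₀ : ℝ)) / b) * b = u - (inner ℝ w x₀ : ℝ) :=
        div_mul_cancel₀ _ (ne_of_gt hbpos)
      nlinarith
    rcases eq_or_lt_of_le hble with hb0 | hbneg
    · subst hb0
      simp only [mul_zero, add_zero] at h1 h2'
      set δ := (inner ℝ w v : ℝ) - u with hδ
      have hδpos : 0 < δ := by simp only [hδ]; linarith
      have hfam : ∀ m : ℝ, 0 ≤ m →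
          fconj g (w₀ + m • w) ≤ ((c₀ + m * u : ℝ) : EReal) := by
        intro m hm
        apply fconj_le
        intro z
        rcases eq_or_ne (g z) ⊤ with hz | hz
        · rw [hz]; exact le_top
        obtain ⟨r, hr⟩ := ereal_cases (hnb z) hz
        have ha := hm₀ z
        rw [hr, EReal.coe_le_coe_iff] at ha
        have hb' := h1 z r hr.le
        rw [hr, EReal.coe_le_coe_iff, inner_add_left, real_inner_smul_left]
        nlinarith
      set M : ℝ := c₀ + (inner ℝ yk v : ℝ) - s - (inner ℝ v w₀ : ℝ) with hM
      set m : ℝ := max 0 ((M + 1) / δ) with hm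
      have hm0 : 0 ≤ m := le_max_left _ _
      have h5 := hv (w₀ + m • w)
      have h6 := le_trans h5 (hfam m hm0)
      rw [hs, ← EReal.coe_add, EReal.coe_le_coe_iff] at h6
      have h7 : (inner ℝ v (w₀ + m • w - yk) : ℝ)
          = (inner ℝ v w₀ : ℝ) + m * (inner ℝ v w : ℝ) - (inner ℝ v yk : ℝ) := by
        rw [inner_sub_right, inner_add_right, real_inner_smul_right]
      rw [h7] at h6
      have h8 : (inner ℝ v w : ℝ) = (inner ℝ w v : ℝ) := real_inner_comm _ _
      have h9 : (inner ℝ v yk : ℝ) = (inner ℝ yk v : ℝ) := real_inner_comm _ _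
      rw [h8, h9] at h6
      have h10 : m * δ ≤ M := by simp only [hδ, hM]; nlinarith
      have h11 : (M + 1) / δ ≤ m := le_max_right _ _
      have h12 : M + 1 ≤ m * δ := (div_le_iff₀ hδpos).mp h11
      linarith
    · obtain ⟨w', c', hm', hid⟩ := minorant_of_sep hnb hbneg h1
      have hs' : fconj g w' ≤ (c' : EReal) := fconj_le hm'
      have h4 := hv w'
      rw [hs, ← EReal.coe_add] at h4
      have h5 := le_trans h4 hs'
      rw [EReal.coe_le_coe_iff] at h5
      have h6 : c < (inner ℝ w' v : ℝ) - c' := by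
        rw [hid v, lt_div_iff₀ (by linarith : (0:ℝ) < -b)]
        nlinarith
      rw [inner_sub_right] at h5
      have h8 : (inner ℝ v w' : ℝ) = (inner ℝ w' v : ℝ) := real_inner_comm _ _
      have h9 : (inner ℝ v yk : ℝ) = (inner ℝ yk v : ℝ) := real_inner_comm _ _
      rw [h8, h9] at h5
      simp only [hc] at h6
      linarith
  have hvt : g v ≠ ⊤ := ne_top_of_le_ne_top (EReal.coe_ne_top c) hkey
  obtain ⟨a, ha⟩ := ereal_cases (hnb v) hvt
  refine ⟨a, ha, fun z => ?_⟩
  have hfy := fy_ineq hnb hs z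
  rw [ha]
  refine le_trans ?_ hfy
  rw [← EReal.coe_add, EReal.coe_le_coe_iff, inner_sub_right]
  have haux : a ≤ c := by
    rw [ha, EReal.coe_le_coe_iff] at hkey
    exact hkey
  simp only [hc] at haux
  linarith

end DCAAux

theorem dca_decrease {n : ℕ} (g : E n → EReal) (h : E n → ℝ) (γ₁ γ₂ : ℝ)
    (hγ₁ : 0 ≤ γ₁) (hγ₂ : 0 ≤ γ₂)
    (hnb : ∀ x, g x ≠ ⊥) (hp : ∃ x, g x ≠ ⊤) (hglsc : LowerSemicontinuous g)
    (hg : GammaConvexE g γ₁)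
    (hh : ConvexOn ℝ Set.univ (fun x => h x - γ₂ / 2 * ‖x‖ ^ 2))
    (x y : ℕ → E n)
    (hy : ∀ k, y k ∈ subdiffR h (x k))
    (hx : ∀ k, x (k + 1) ∈ subdiffE (fconj g) (y k)) :
    (∀ k, (((γ₁ + γ₂) / 2 * ‖x (k + 1) - x k‖ ^ 2 : ℝ) : EReal) ≤
        (g (x k) - (h (x k) : EReal)) - (g (x (k + 1)) - (h (x (k + 1)) : EReal))) ∧
      ∀ k, (g (x (k + 1)) - (h (x (k + 1)) : EReal)) ≤ g (x k) - (h (x k) : EReal) := by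
  obtain ⟨x₀, hx₀t⟩ := hp
  obtain ⟨a₀, hx₀⟩ := DCAAux.ereal_cases (hnb x₀) hx₀t
  have hconvE := DCAAux.convexE_of_gamma hγ₁ hg hnb
  have step : ∀ k, (((γ₁ + γ₂) / 2 * ‖x (k + 1) - x k‖ ^ 2 : ℝ) : EReal) ≤
      (g (x k) - (h (x k) : EReal)) - (g (x (k + 1)) - (h (x (k + 1)) : EReal)) ∧
      (g (x (k + 1)) - (h (x (k + 1)) : EReal)) ≤ g (x k) - (h (x k) : EReal) := by
    intro k
    obtain ⟨a, ha, hsub⟩ := DCAAux.subdiff_of_conj hnb hglsc hconvE hx₀ (hx k)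
    have hgineq := DCAAux.strong_subgrad hγ₁ hg hnb ha hsub (x k)
    have hhineq := DCAAux.strong_subgrad_real hγ₂ hh (hy k) (x (k + 1))
    rcases eq_or_ne (g (x k)) ⊤ with hk | hk
    · constructor
      · rw [hk, ha, EReal.top_sub_coe, ← EReal.coe_sub, EReal.top_sub_coe]
        exact le_top
      · rw [hk, EReal.top_sub_coe]
        exact le_top
    · obtain ⟨bk, hbk⟩ := DCAAux.ereal_cases (hnb _) hk
      rw [hbk] at hgineq
      rw [EReal.coe_le_coe_iff] at hgineq
      have hnorm : ‖x k - x (k + 1)‖ = ‖x (k + 1) - x k‖ := norm_sub_rev _ _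
      have hip : (inner ℝ (y k) (x k - x (k + 1)) : ℝ)
          = -(inner ℝ (y k) (x (k + 1) - x k) : ℝ) := by
        rw [← inner_neg_right]
        congr 1
        abel
      rw [hnorm, hip] at hgineq
      constructor
      · rw [ha, hbk, ← EReal.coe_sub, ← EReal.coe_sub, ← EReal.coe_sub, EReal.coe_le_coe_iff]
        linarith
      · rw [ha, hbk, ← EReal.coe_sub, ← EReal.coe_sub, EReal.coe_le_coe_iff]
        have hsq : 0 ≤ γ₁ / 2 * ‖x (k + 1) - x k‖ ^ 2 :=
          mul_nonneg (by linarith) (sq_nonneg _)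
        have hsq2 : 0 ≤ γ₂ / 2 * ‖x (k + 1) - x k‖ ^ 2 :=
          mul_nonneg (by linarith) (sq_nonneg _)
        linarith
  exact ⟨fun k => (step k).1, fun k => (step k).2⟩
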